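/- In a completely randomized experiment with N ≥ 2, the sampling variance of the difference-in-means estimator τ̂ over all possible randomizations equals Var(τ̂) = S₁²/N₁ + S₀²/N₀ − S_τ²/N, where S_t² = (1/(N−1))Σ_{i=1}^N {Y_i(t) − Ȳ_t}² for t = 0,1 with Ȳ_t = (1/N)Σ_{i=1}^N Y_i(t), and S_τ² = (1/(N−1))Σ_{i=1}^N (τ_i − τ)² with τ_i = Y_i(1) − Y_i(0) and τ = (1/N)Σ_{i=1}^N τ_i. -/

import Mathlib

open Finset

noncomputable section

/-- Completely randomized assignments: vectors in `{0,1}^N` with exactly `N₁` ones. -/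
def CRD (N N₁ : ℕ) : Finset (Fin N → Bool) :=
  Finset.univ.filter fun T => (Finset.univ.filter fun i => T i = true).card = N₁

noncomputable def crdExp (N N₁ : ℕ) (f : (Fin N → Bool) → ℝ) : ℝ :=
  (∑ T ∈ CRD N N₁, f T) / ((CRD N N₁).card : ℝ)

noncomputable def crdVar (N N₁ : ℕ) (f : (Fin N → Bool) → ℝ) : ℝ :=
  crdExp N N₁ fun T => (f T - crdExp N N₁ f) ^ 2

/-- The difference-in-means estimator based on observed outcomes
`Yᵢobs = Tᵢ Yᵢ(1) + (1−Tᵢ) Yᵢ(0)`. -/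
noncomputable def tauhat (N N₁ : ℕ) (Y1 Y0 : Fin N → ℝ) (T : Fin N → Bool) : ℝ :=
  (∑ i, if T i then Y1 i else 0) / (N₁ : ℝ)
    - (∑ i, if T i then 0 else Y0 i) / ((N - N₁ : ℕ) : ℝ)

/-- The sampling variance of the difference-in-means estimator over
all randomizations is `Var(τ̂) = S₁²/N₁ + S₀²/N₀ − S_τ²/N`, where `S₁², S₀²` are
the finite population variances of the potential outcomes and `S_τ²` is the
finite population variance of the individual causal effects. -/
lemma count_subsets {α : Type*} [DecidableEq α] (s u : Finset α) (hu : u ⊆ s) (k : ℕ)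
    (hk : u.card ≤ k) :
    ((s.powersetCard k).filter (fun t => u ⊆ t)).card = (s.card - u.card).choose (k - u.card) := by
  have h1 : ((s.powersetCard k).filter (fun t => u ⊆ t)).card
      = ((s \ u).powersetCard (k - u.card)).card := by
    apply Finset.card_bij' (fun t _ => t \ u) (fun v _ => v ∪ u)
    · intro t ht
      simp only [Finset.mem_filter, Finset.mem_powersetCard] at ht ⊢
      obtain ⟨⟨hts, htk⟩, hut⟩ := ht
      exact ⟨Finset.sdiff_subset_sdiff hts (le_refl u), by rw [Finset.card_sdiff_of_subset hut, htk]⟩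
    · intro v hv
      rw [Finset.mem_powersetCard] at hv
      obtain ⟨hvs, hvk⟩ := hv
      have hdisj : Disjoint v u := Finset.disjoint_of_subset_left hvs (Finset.sdiff_disjoint)
      simp only [Finset.mem_filter, Finset.mem_powersetCard]
      refine ⟨⟨?_, ?_⟩, Finset.subset_union_right⟩
      · exact Finset.union_subset (hvs.trans (Finset.sdiff_subset)) hu
      · rw [Finset.card_union_of_disjoint hdisj, hvk]
        omega
    · intro t ht
      simp only [Finset.mem_filter] at ht
      exact Finset.sdiff_union_of_subset ht.2
    · intro v hv
      rw [Finset.mem_powersetCard] at hv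
      have hdisj : Disjoint v u := Finset.disjoint_of_subset_left hv.1 (Finset.sdiff_disjoint)
      rw [Finset.union_sdiff_right, Finset.sdiff_eq_self_of_disjoint hdisj]
  rw [h1, Finset.card_powersetCard, Finset.card_sdiff_of_subset hu]


lemma crd_count (N N₁ : ℕ) (u : Finset (Fin N)) (hk : u.card ≤ N₁) (p : (Fin N → Bool) → Prop)
    [DecidablePred p] (hp : ∀ T, p T ↔ ∀ i ∈ u, T i = true) :
    ((CRD N N₁).filter p).card = (N - u.card).choose (N₁ - u.card) := by
  have h1 : ((CRD N N₁).filter p).card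
      = (((univ : Finset (Fin N)).powersetCard N₁).filter (fun t => u ⊆ t)).card := by
    refine Finset.card_bij' (fun T _ => Finset.univ.filter fun i => T i = true)
      (fun s _ => fun i => decide (i ∈ s)) ?hi ?hj ?li ?ri
    case hi =>
      intro T hT
      simp only [CRD, Finset.mem_filter, Finset.mem_univ, true_and] at hT
      simp only [Finset.mem_filter, Finset.mem_powersetCard]
      refine ⟨⟨Finset.subset_univ _, hT.1⟩, ?_⟩
      intro i hi
      simp only [Finset.mem_filter, Finset.mem_univ, true_and]
      exact (hp T).mp hT.2 i hi
    case hj =>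
      intro s hs
      simp only [Finset.mem_filter, Finset.mem_powersetCard] at hs
      simp only [CRD, Finset.mem_filter, Finset.mem_univ, true_and]
      constructor
      · have : (Finset.univ.filter fun i => decide (i ∈ s) = true) = s := by
          ext i; simp
        rw [this]; exact hs.1.2
      · rw [hp]; intro i hi; simp [hs.2 hi]
    case li =>
      intro T hT
      funext i
      simp
    case ri =>
      intro s hs
      ext i; simp
  rw [h1, count_subsets _ u (Finset.subset_univ u) N₁ hk, Finset.card_univ, Fintype.card_fin]
lemma crd_card (N N₁ : ℕ) : (CRD N N₁).card = N.choose N₁ := by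
  have h := crd_count N N₁ ∅ (Nat.zero_le _) (fun _ => True) (by simp)
  simpa using h

lemma crd_count_one (N N₁ : ℕ) (h1 : 1 ≤ N₁) (i : Fin N) :
    ((CRD N N₁).filter (fun T => T i = true)).card = (N - 1).choose (N₁ - 1) := by
  have h := crd_count N N₁ {i} (by simpa using h1) (fun T => T i = true) (by simp)
  simpa using h

lemma crd_count_two (N N₁ : ℕ) (h2 : 2 ≤ N₁) (i j : Fin N) (hij : i ≠ j) :
    ((CRD N N₁).filter (fun T => T i = true ∧ T j = true)).card
      = (N - 2).choose (N₁ - 2) := by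
  have hc : ({i, j} : Finset (Fin N)).card = 2 := by
    rw [Finset.card_insert_of_notMem (by simpa using hij), Finset.card_singleton]
  have hp : ∀ T : Fin N → Bool, (T i = true ∧ T j = true) ↔ ∀ k ∈ ({i, j} : Finset (Fin N)), T k = true := by
    intro T
    constructor
    · rintro ⟨a, b⟩ k hk
      simp only [Finset.mem_insert, Finset.mem_singleton] at hk
      rcases hk with rfl | rfl
      · exact a
      · exact b
    · intro h
      exact ⟨h i (by simp), h j (by simp)⟩
  have h := crd_count N N₁ {i, j} (by rw [hc]; exact h2)
    (fun T => T i = true ∧ T j = true) hp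
  rw [hc] at h
  exact h

lemma crd_count_two_eq_zero (N : ℕ) (i j : Fin N) (hij : i ≠ j) :
    ((CRD N 1).filter (fun T => T i = true ∧ T j = true)).card = 0 := by
  rw [Finset.card_eq_zero]
  ext T
  simp only [Finset.mem_filter, Finset.notMem_empty, iff_false, CRD, Finset.mem_univ, true_and]
  rintro ⟨h1, hi, hj⟩
  have : ({i, j} : Finset (Fin N)) ⊆ Finset.univ.filter fun k => T k = true := by
    intro k hk
    simp only [Finset.mem_insert, Finset.mem_singleton] at hk
    rcases hk with rfl | rfl <;> simp [hi, hj]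
  have hcard := Finset.card_le_card this
  rw [h1, Finset.card_insert_of_notMem (by simpa using hij), Finset.card_singleton] at hcard
  omega

lemma sum_sq_dev {N : ℕ} (hN : (N : ℝ) ≠ 0) (x : Fin N → ℝ) :
    ∑ i, (x i - (∑ j, x j) / (N : ℝ)) ^ 2
      = ∑ i, (x i) ^ 2 - (∑ i, x i) ^ 2 / (N : ℝ) := by
  have h : ∀ i : Fin N, (x i - (∑ j, x j) / (N : ℝ)) ^ 2
      = (x i) ^ 2 - (2 * ((∑ j, x j) / (N : ℝ))) * x i + ((∑ j, x j) / (N : ℝ)) ^ 2 :=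
    fun i => by ring
  simp_rw [h]
  rw [Finset.sum_add_distrib, Finset.sum_sub_distrib, ← Finset.mul_sum, Finset.sum_const,
    Finset.card_univ, Fintype.card_fin, nsmul_eq_mul]
  field_simp
  ring

set_option maxHeartbeats 1000000 in
theorem stmt3 (N N₁ N₀ : ℕ) (hN : 2 ≤ N) (h1 : 1 ≤ N₁) (h2 : N₁ ≤ N - 1)
    (hN₀ : N₀ = N - N₁) (Y1 Y0 : Fin N → ℝ) :
    crdVar N N₁ (tauhat N N₁ Y1 Y0)
      = ((∑ i, (Y1 i - (∑ j, Y1 j) / (N : ℝ)) ^ 2) / ((N : ℝ) - 1)) / (N₁ : ℝ)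
        + ((∑ i, (Y0 i - (∑ j, Y0 j) / (N : ℝ)) ^ 2) / ((N : ℝ) - 1)) / (N₀ : ℝ)
        - ((∑ i, ((Y1 i - Y0 i) - (∑ j, (Y1 j - Y0 j)) / (N : ℝ)) ^ 2)
            / ((N : ℝ) - 1)) / (N : ℝ) := by
  -- basic numeric facts
  have hN1N : N₁ ≤ N := le_trans h2 (Nat.sub_le N 1)
  have hN0pos : 1 ≤ N₀ := by omega
  have hrN : (N : ℝ) ≠ 0 := by positivity
  have hrN1 : (N₁ : ℝ) ≠ 0 := by positivity
  have hrN0 : (N₀ : ℝ) ≠ 0 := by positivity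
  have hrNm1 : (N : ℝ) - 1 ≠ 0 := by
    have : (2 : ℝ) ≤ (N : ℝ) := by exact_mod_cast hN
    linarith
  have hr0 : ((N₀ : ℕ) : ℝ) = (N : ℝ) - (N₁ : ℝ) := by
    rw [hN₀]; push_cast [Nat.cast_sub hN1N]; ring
  have hχpos : 0 < N.choose N₁ := Nat.choose_pos hN1N
  have hχ : ((N.choose N₁ : ℕ) : ℝ) ≠ 0 := by positivity
  set χ : ℝ := ((N.choose N₁ : ℕ) : ℝ) with hχdef
  -- the count identities (real versions)
  have hC1 : (((N - 1).choose (N₁ - 1) : ℕ) : ℝ) * (N : ℝ) = χ * (N₁ : ℝ) := by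
    have hnat : N * (N - 1).choose (N₁ - 1) = N.choose N₁ * N₁ := by
      have := Nat.add_one_mul_choose_eq (N - 1) (N₁ - 1)
      have e1 : N - 1 + 1 = N := by omega
      have e2 : N₁ - 1 + 1 = N₁ := by omega
      rw [e1, e2] at this
      exact this
    have hc := congrArg (fun k : ℕ => (k : ℝ)) hnat
    simp only [Nat.cast_mul] at hc
    rw [hχdef]
    linear_combination hc
  -- the constants
  set A : ℝ := ∑ i, ((Y1 i) / (N₁ : ℝ) + (Y0 i) / (N₀ : ℝ)) with hA
  set a : Fin N → ℝ := fun i => (Y1 i) / (N₁ : ℝ) + (Y0 i) / (N₀ : ℝ) with ha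
  set A2 : ℝ := ∑ i, (a i) ^ 2 with hA2
  set C1 : ℝ := (((N - 1).choose (N₁ - 1) : ℕ) : ℝ) with hC1def
  set q' : ℝ := χ * ((N₁ : ℝ) * ((N₁ : ℝ) - 1)) / ((N : ℝ) * ((N : ℝ) - 1)) with hq'
  -- pair count
  have hpair : ∀ i j : Fin N, i ≠ j →
      ((((CRD N N₁).filter (fun T => T i = true ∧ T j = true)).card : ℕ) : ℝ) = q' := by
    intro i j hij
    rcases Nat.lt_or_ge N₁ 2 with hlt | hge
    · have hN1eq : N₁ = 1 := by omega
      subst hN1eq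
      rw [crd_count_two_eq_zero N i j hij]
      rw [hq']
      norm_num
    · rw [crd_count_two N N₁ hge i j hij]
      have hnat : N * ((N - 1) * (N - 2).choose (N₁ - 2)) = N.choose N₁ * (N₁ * (N₁ - 1)) := by
        have t1 := Nat.add_one_mul_choose_eq (N - 2) (N₁ - 2)
        have e1 : N - 2 + 1 = N - 1 := by omega
        have e2 : N₁ - 2 + 1 = N₁ - 1 := by omega
        rw [e1, e2] at t1
        have t2 := Nat.add_one_mul_choose_eq (N - 1) (N₁ - 1)
        have e3 : N - 1 + 1 = N := by omega
        have e4 : N₁ - 1 + 1 = N₁ := by omega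
        rw [e3, e4] at t2
        calc N * ((N - 1) * (N - 2).choose (N₁ - 2)) = N * ((N - 1).choose (N₁ - 1) * (N₁ - 1)) := by
              rw [t1]
          _ = (N * (N - 1).choose (N₁ - 1)) * (N₁ - 1) := by ring
          _ = (N.choose N₁ * N₁) * (N₁ - 1) := by rw [t2]
          _ = N.choose N₁ * (N₁ * (N₁ - 1)) := by ring
      have c1 : ((N - 1 : ℕ) : ℝ) = (N : ℝ) - 1 := by
        rw [Nat.cast_sub (by omega : 1 ≤ N), Nat.cast_one]
      have c2 : ((N₁ - 1 : ℕ) : ℝ) = (N₁ : ℝ) - 1 := by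
        rw [Nat.cast_sub (by omega : 1 ≤ N₁), Nat.cast_one]
      have hcast := congrArg (fun k : ℕ => (k : ℝ)) hnat
      simp only [Nat.cast_mul] at hcast
      rw [c1, c2] at hcast
      rw [hq', hχdef, eq_div_iff (mul_ne_zero hrN hrNm1)]
      linear_combination hcast
  -- rewrite tauhat
  have htau : ∀ T : Fin N → Bool, tauhat N N₁ Y1 Y0 T
      = (∑ i, if T i then a i else 0) - (∑ i, Y0 i) / (N₀ : ℝ) := by
    intro T
    unfold tauhat
    have hcast0 : ((N - N₁ : ℕ) : ℝ) = (N₀ : ℝ) := by rw [hN₀]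
    rw [hcast0]
    have e1 : (∑ i, if T i then (0 : ℝ) else Y0 i) = (∑ i, Y0 i) - ∑ i, (if T i then Y0 i else 0) := by
      rw [← Finset.sum_sub_distrib]
      apply Finset.sum_congr rfl
      intro i _
      by_cases h : T i <;> simp [h]
    have e2 : (∑ i, if T i then a i else 0)
        = (∑ i, if T i then Y1 i else 0) / (N₁ : ℝ) + (∑ i, if T i then Y0 i else 0) / (N₀ : ℝ) := by
      rw [ha]
      rw [Finset.sum_div, Finset.sum_div, ← Finset.sum_add_distrib]
      apply Finset.sum_congr rfl
      intro i _
      by_cases h : T i <;> simp [h]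
    rw [e1, e2]
    ring
  -- the cardinality of CRD
  have hcard : ((CRD N N₁).card : ℝ) = χ := by rw [crd_card]
  -- expectation of g
  have hEg : ∑ T ∈ CRD N N₁, (∑ i, if T i then a i else 0) = C1 * A := by
    rw [Finset.sum_comm]
    have : ∀ i : Fin N, (∑ T ∈ CRD N N₁, if T i then a i else 0) = C1 * a i := by
      intro i
      have : (∑ T ∈ CRD N N₁, if T i then a i else 0)
          = ∑ T ∈ (CRD N N₁).filter (fun T => T i = true), a i := by
        rw [Finset.sum_filter]
      rw [this, Finset.sum_const, crd_count_one N N₁ h1 i, nsmul_eq_mul, hC1def]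
    rw [Finset.sum_congr rfl (fun i _ => this i), ← Finset.mul_sum, hA]
  -- second moment of g
  have hEg2 : ∑ T ∈ CRD N N₁, (∑ i, if T i then a i else 0) ^ 2
      = C1 * A2 + q' * (A ^ 2 - A2) := by
    have hsq : ∀ T : Fin N → Bool, (∑ i, if T i then a i else 0) ^ 2
        = ∑ i, ∑ j, (if T i = true ∧ T j = true then a i * a j else 0) := by
      intro T
      rw [sq, Finset.sum_mul_sum]
      apply Finset.sum_congr rfl; intro i _
      apply Finset.sum_congr rfl; intro j _
      by_cases hi : T i <;> by_cases hj : T j <;> simp [hi, hj]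
    simp_rw [hsq]
    rw [Finset.sum_comm]
    have hinner : ∀ i : Fin N,
        (∑ T ∈ CRD N N₁, ∑ j, if T i = true ∧ T j = true then a i * a j else 0)
        = C1 * (a i) ^ 2 + q' * (a i * (A - a i)) := by
      intro i
      rw [Finset.sum_comm]
      have hterm : ∀ j : Fin N, (∑ T ∈ CRD N N₁, if T i = true ∧ T j = true then a i * a j else 0)
          = ((((CRD N N₁).filter (fun T => T i = true ∧ T j = true)).card : ℕ) : ℝ) * (a i * a j) := by
        intro j
        rw [← Finset.sum_filter, Finset.sum_const, nsmul_eq_mul]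
      simp_rw [hterm]
      rw [← Finset.add_sum_erase _ _ (Finset.mem_univ i)]
      have hii : ((((CRD N N₁).filter (fun T => T i = true ∧ T i = true)).card : ℕ) : ℝ) = C1 := by
        have : (CRD N N₁).filter (fun T => T i = true ∧ T i = true)
            = (CRD N N₁).filter (fun T => T i = true) := by
          apply Finset.filter_congr; intro T _; simp
        rw [this, crd_count_one N N₁ h1 i, hC1def]
      rw [hii]
      have hrest : ∑ j ∈ Finset.univ.erase i,
          ((((CRD N N₁).filter (fun T => T i = true ∧ T j = true)).card : ℕ) : ℝ) * (a i * a j)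
          = q' * (a i * (A - a i)) := by
        have : ∀ j ∈ Finset.univ.erase i,
            ((((CRD N N₁).filter (fun T => T i = true ∧ T j = true)).card : ℕ) : ℝ) * (a i * a j)
            = q' * a i * a j := by
          intro j hj
          rw [hpair i j (Ne.symm (Finset.ne_of_mem_erase hj))]
          ring
        rw [Finset.sum_congr rfl this, ← Finset.mul_sum,
          Finset.sum_erase_eq_sub (Finset.mem_univ i), ← hA]
        ring
      rw [hrest]
      ring
    rw [Finset.sum_congr rfl (fun i _ => hinner i), Finset.sum_add_distrib,
      ← Finset.mul_sum, ← Finset.mul_sum, ← hA2]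
    have : ∑ i, a i * (A - a i) = A ^ 2 - A2 := by
      have : ∀ i : Fin N, a i * (A - a i) = a i * A - (a i) ^ 2 := fun i => by ring
      rw [Finset.sum_congr rfl (fun i _ => this i), Finset.sum_sub_distrib, ← Finset.sum_mul,
        ← hA, ← hA2]
      ring
    rw [this]
  -- variance decomposition
  have hvar : crdVar N N₁ (tauhat N N₁ Y1 Y0)
      = (C1 * A2 + q' * (A ^ 2 - A2)) / χ - (C1 * A / χ) ^ 2 := by
    unfold crdVar crdExp
    rw [hcard]
    have hμ : (∑ T ∈ CRD N N₁, tauhat N N₁ Y1 Y0 T) = C1 * A - χ * ((∑ i, Y0 i) / (N₀ : ℝ)) := by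
      rw [Finset.sum_congr rfl (fun T _ => htau T), Finset.sum_sub_distrib, hEg,
        Finset.sum_const, nsmul_eq_mul, hcard]
    rw [hμ]
    have hdev : ∀ T ∈ CRD N N₁, (tauhat N N₁ Y1 Y0 T
        - (C1 * A - χ * ((∑ i, Y0 i) / (N₀ : ℝ))) / χ) ^ 2
        = ((∑ i, if T i then a i else 0) - C1 * A / χ) ^ 2 := by
      intro T _
      rw [htau T]
      congr 1
      field_simp
      ring
    rw [Finset.sum_congr rfl hdev]
    have hexp : ∀ T : Fin N → Bool, ((∑ i, if T i then a i else 0) - C1 * A / χ) ^ 2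
        = (∑ i, if T i then a i else 0) ^ 2
          - (2 * (C1 * A / χ)) * (∑ i, if T i then a i else 0) + (C1 * A / χ) ^ 2 :=
      fun T => by ring
    rw [Finset.sum_congr rfl (fun T _ => hexp T), Finset.sum_add_distrib,
      Finset.sum_sub_distrib, ← Finset.mul_sum, hEg, hEg2, Finset.sum_const, nsmul_eq_mul, hcard]
    field_simp
    ring
  rw [hvar]
  -- expand the RHS sums
  rw [sum_sq_dev hrN Y1, sum_sq_dev hrN Y0, sum_sq_dev hrN (fun i => Y1 i - Y0 i)]
  have hd : ∑ i, (Y1 i - Y0 i) ^ 2 = ∑ i, (Y1 i) ^ 2 + ∑ i, (Y0 i) ^ 2 - 2 * ∑ i, Y1 i * Y0 i := by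
    have h : ∀ i : Fin N, (Y1 i - Y0 i) ^ 2 = (Y1 i) ^ 2 + (Y0 i) ^ 2 - 2 * (Y1 i * Y0 i) :=
      fun i => by ring
    rw [Finset.sum_congr rfl (fun i _ => h i), Finset.sum_sub_distrib, Finset.sum_add_distrib,
      ← Finset.mul_sum]
  have hds : ∑ i, (Y1 i - Y0 i) = ∑ i, Y1 i - ∑ i, Y0 i := Finset.sum_sub_distrib _ _
  rw [hd, hds]
  -- expand A and A2
  have hAe : A = (∑ i, Y1 i) / (N₁ : ℝ) + (∑ i, Y0 i) / (N₀ : ℝ) := by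
    rw [hA, Finset.sum_add_distrib, Finset.sum_div, Finset.sum_div]
  have hA2e : A2 = (∑ i, (Y1 i) ^ 2) / (N₁ : ℝ) ^ 2 + (∑ i, (Y0 i) ^ 2) / (N₀ : ℝ) ^ 2
      + (2 / ((N₁ : ℝ) * (N₀ : ℝ))) * (∑ i, Y1 i * Y0 i) := by
    rw [hA2]
    have : ∀ i : Fin N, (a i) ^ 2 = (Y1 i) ^ 2 / (N₁ : ℝ) ^ 2 + (Y0 i) ^ 2 / (N₀ : ℝ) ^ 2
        + (2 / ((N₁ : ℝ) * (N₀ : ℝ))) * (Y1 i * Y0 i) := by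
      intro i
      rw [ha]
      field_simp
      ring
    rw [Finset.sum_congr rfl (fun i _ => this i), Finset.sum_add_distrib,
      Finset.sum_add_distrib, Finset.sum_div, Finset.sum_div, ← Finset.mul_sum]
  rw [hAe, hA2e]
  -- use hC1 to replace C1
  have hC1' : C1 = χ * (N₁ : ℝ) / (N : ℝ) := by
    rw [eq_div_iff hrN]
    exact hC1
  rw [hC1', hq', hr0]
  have hNN1 : (N : ℝ) - (N₁ : ℝ) ≠ 0 := by rw [← hr0]; exact hrN0
  field_simp [hNN1, hrN, hrN1, hrNm1, hχ]
  ring
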